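/- (Error threshold for the sharp peak landscape.) Let a ∈ [0,+∞] and let (ℓ_m) and (q_m) be sequences with ℓ_m → ∞, q_m → 0 and ℓ_m q_m → a. For each m, let x_m be a quasispecies solution for the sharp peak fitness function on 𝒜^{ℓ_m} with mutation probability q_m and some wild type w*_m, with mean fitness λ_m. Then: (i) if a > ln σ, λ_m → 1 and x_m(w*_m) → 0; (ii) if a < ln σ, λ_m → σ e^{−a} > 1 and x_m(w*_m) → (σ e^{−a} − 1)/(σ − 1). -/

import Mathlib

open scoped BigOperators
open Filter Topology

private lemma aux_case1 {σ : ℝ} (hσ : 1 < σ) {y c q : ℕ → ℝ}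
    (hy0 : ∀ m, 0 ≤ y m)
    (hup : ∀ m, y m + (σ - 1) * y m ^ 2 ≤ σ * c m * y m + q m)
    (hq : Tendsto q atTop (𝓝 0))
    (hc : ∀ᶠ m in atTop, σ * c m ≤ 1) :
    Tendsto y atTop (𝓝 0) := by
  have hσ1 : (0:ℝ) < σ - 1 := by linarith
  have hbound : ∀ᶠ m in atTop, y m ≤ Real.sqrt (q m / (σ - 1)) := by
    filter_upwards [hc] with m hcm
    have h1 : (σ - 1) * y m ^ 2 ≤ q m := by nlinarith [hup m, hy0 m]
    have h2 : y m ^ 2 ≤ q m / (σ - 1) := (le_div_iff₀ hσ1).mpr (by linarith)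
    calc y m = Real.sqrt (y m ^ 2) := (Real.sqrt_sq (hy0 m)).symm
      _ ≤ _ := Real.sqrt_le_sqrt h2
  have hsq : Tendsto (fun m => Real.sqrt (q m / (σ - 1))) atTop (𝓝 0) := by
    have := (hq.div_const (σ - 1)).sqrt
    simpa using this
  exact tendsto_of_tendsto_of_tendsto_of_le_of_le' tendsto_const_nhds hsq
    (Eventually.of_forall hy0) hbound

private lemma aux_case2 {σ e : ℝ} (hσ : 1 < σ) (hσe : 1 < σ * e) {y c q : ℕ → ℝ}
    (hy0 : ∀ m, 0 < y m)
    (hlow : ∀ m, σ * c m * y m ≤ y m + (σ - 1) * y m ^ 2)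
    (hup : ∀ m, y m + (σ - 1) * y m ^ 2 ≤ σ * c m * y m + q m)
    (hq : Tendsto q atTop (𝓝 0))
    (hc : Tendsto c atTop (𝓝 e)) :
    Tendsto y atTop (𝓝 ((σ * e - 1) / (σ - 1))) := by
  have hσ1 : (0:ℝ) < σ - 1 := by linarith
  set b : ℕ → ℝ := fun m => (σ * c m - 1) / (σ - 1) with hbdef
  have hb : Tendsto b atTop (𝓝 ((σ * e - 1) / (σ - 1))) :=
    ((hc.const_mul σ).sub_const 1).div_const _
  have hbm : ∀ m, (σ - 1) * b m = σ * c m - 1 := by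
    intro m; rw [hbdef]; field_simp
  have hlo : ∀ m, b m ≤ y m := by
    intro m
    rw [hbdef]; dsimp only
    rw [div_le_iff₀ hσ1]
    nlinarith [hlow m, hy0 m]
  have hhi : ∀ m, y m ≤ b m / 2 + Real.sqrt ((b m / 2) ^ 2 + q m / (σ - 1)) := by
    intro m
    have hbm' : (σ - 1) * b m * y m = (σ * c m - 1) * y m := by rw [hbm m]
    have h2 : ((y m - b m / 2) ^ 2 - (b m / 2) ^ 2) * (σ - 1) ≤ q m := by
      nlinarith [hup m, hbm']
    have h1 : (y m - b m / 2) ^ 2 ≤ (b m / 2) ^ 2 + q m / (σ - 1) := by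
      have := (le_div_iff₀ hσ1).mpr h2
      linarith
    have h3 : y m - b m / 2 ≤ Real.sqrt ((b m / 2) ^ 2 + q m / (σ - 1)) :=
      calc y m - b m / 2 ≤ |y m - b m / 2| := le_abs_self _
        _ = Real.sqrt ((y m - b m / 2) ^ 2) := (Real.sqrt_sq_eq_abs _).symm
        _ ≤ _ := Real.sqrt_le_sqrt h1
    linarith
  set Y := (σ * e - 1) / (σ - 1) with hY
  have hYpos : 0 < Y := div_pos (by linarith) hσ1
  have hU : Tendsto (fun m => b m / 2 + Real.sqrt ((b m / 2) ^ 2 + q m / (σ - 1)))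
      atTop (𝓝 Y) := by
    have h4 : Tendsto (fun m => (b m / 2) ^ 2 + q m / (σ - 1)) atTop
        (𝓝 ((Y / 2) ^ 2 + 0)) := ((hb.div_const 2).pow 2).add (by simpa using hq.div_const (σ - 1))
    have h5 := (hb.div_const 2).add h4.sqrt
    have h6 : Y / 2 + Real.sqrt ((Y / 2) ^ 2 + 0) = Y := by
      rw [add_zero, Real.sqrt_sq (by positivity)]; ring
    rwa [h6] at h5
  exact tendsto_of_tendsto_of_tendsto_of_le_of_le hb hU hlo hhi
theorem error_threshold_sharp_peak
    (A : Type*) [Fintype A] [DecidableEq A] (κ : ℕ)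
    (hκ : Fintype.card A = κ) (hκ2 : 2 ≤ κ)
    (σ : ℝ) (hσ : 1 < σ)
    (a : EReal) (ha : (0 : EReal) ≤ a)
    (ℓ : ℕ → ℕ) (q : ℕ → ℝ)
    (hℓ : Tendsto ℓ atTop atTop)
    (hq0 : ∀ m, 0 < q m) (hq1 : ∀ m, q m < ((κ : ℝ) - 1) / κ)
    (hq : Tendsto q atTop (𝓝 0))
    (hlq : Tendsto (fun m => (((ℓ m : ℝ) * q m : ℝ) : EReal)) atTop (𝓝 a))
    (wstar : ∀ m, Fin (ℓ m) → A)
    (f : ∀ m, (Fin (ℓ m) → A) → ℝ)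
    (hf : ∀ m u, f m u = if u = wstar m then σ else 1)
    (x : ∀ m, (Fin (ℓ m) → A) → ℝ)
    (hx0 : ∀ m u, 0 ≤ x m u) (hx1 : ∀ m, ∑ u, x m u = 1)
    (hqs : ∀ m u, x m u * (∑ v, x m v * f m v) =
      ∑ v, x m v * f m v *
        ((q m / ((κ : ℝ) - 1)) ^ hammingDist v u *
          (1 - q m) ^ (ℓ m - hammingDist v u))) :
    (((Real.log σ : ℝ) : EReal) < a →
      Tendsto (fun m => ∑ v, x m v * f m v) atTop (𝓝 1) ∧
        Tendsto (fun m => x m (wstar m)) atTop (𝓝 0)) ∧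
    (a < ((Real.log σ : ℝ) : EReal) →
      1 < σ * Real.exp (-a.toReal) ∧
        Tendsto (fun m => ∑ v, x m v * f m v) atTop (𝓝 (σ * Real.exp (-a.toReal))) ∧
        Tendsto (fun m => x m (wstar m)) atTop
          (𝓝 ((σ * Real.exp (-a.toReal) - 1) / (σ - 1)))) := by
  have hσ0 : (0:ℝ) < σ := by linarith
  have hσ1 : (0:ℝ) < σ - 1 := by linarith
  have hK2 : (2:ℝ) ≤ (κ:ℝ) := by exact_mod_cast hκ2
  have hK1 : (1:ℝ) ≤ (κ:ℝ) - 1 := by linarith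
  have hq1' : ∀ m, q m < 1 := by
    intro m
    refine lt_of_lt_of_le (hq1 m) ?_
    rw [div_le_one (by linarith : (0:ℝ) < (κ:ℝ))]
    linarith
  -- notation
  set y : ℕ → ℝ := fun m => x m (wstar m) with hydef
  set c : ℕ → ℝ := fun m => (1 - q m) ^ (ℓ m) with hcdef
  -- mean fitness identity
  have hA : ∀ m, (∑ v, x m v * f m v) = 1 + (σ - 1) * y m := by
    intro m
    have hterm : ∀ v, x m v * f m v
        = x m v + (if v = wstar m then (σ - 1) * x m v else 0) := by
      intro v
      rw [hf m v]
      by_cases h : v = wstar m <;> simp [h] <;> ring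
    calc (∑ v, x m v * f m v)
        = ∑ v, (x m v + if v = wstar m then (σ - 1) * x m v else 0) :=
          Finset.sum_congr rfl fun v _ => hterm v
      _ = (∑ v, x m v) + ∑ v, (if v = wstar m then (σ - 1) * x m v else 0) :=
          Finset.sum_add_distrib
      _ = 1 + (σ - 1) * y m := by
          rw [hx1 m, Finset.sum_ite_eq']
          simp [hydef]
  -- positivity of the mutation kernel
  have hMpos : ∀ m (v u : Fin (ℓ m) → A),
      0 < (q m / ((κ : ℝ) - 1)) ^ hammingDist v u
        * (1 - q m) ^ (ℓ m - hammingDist v u) := by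
    intro m v u
    have h1 : 0 < q m / ((κ:ℝ) - 1) := div_pos (hq0 m) (by linarith)
    have h2 : 0 < 1 - q m := by linarith [hq1' m]
    exact mul_pos (pow_pos h1 _) (pow_pos h2 _)
  have hfpos : ∀ m v, (1:ℝ) ≤ f m v := by
    intro m v
    rw [hf m v]
    by_cases h : v = wstar m <;> simp [h] <;> linarith
  -- positivity of x at the wild type
  have hy0 : ∀ m, 0 < y m := by
    intro m
    rcases (hx0 m (wstar m)).lt_or_eq with h | h
    · exact h
    · exfalso
      have hz : (0:ℝ) = ∑ v, x m v * f m v *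
          ((q m / ((κ : ℝ) - 1)) ^ hammingDist v (wstar m) *
            (1 - q m) ^ (ℓ m - hammingDist v (wstar m))) := by
        have := hqs m (wstar m)
        rw [← h] at this
        simpa using this
      have hnn : ∀ v ∈ Finset.univ, (0:ℝ) ≤ x m v * f m v *
          ((q m / ((κ : ℝ) - 1)) ^ hammingDist v (wstar m) *
            (1 - q m) ^ (ℓ m - hammingDist v (wstar m))) := fun v _ =>
        mul_nonneg (mul_nonneg (hx0 m v) (by linarith [hfpos m v])) (hMpos m v _).le
      have hall := (Finset.sum_eq_zero_iff_of_nonneg hnn).1 hz.symm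
      have hxz : ∀ v, x m v = 0 := by
        intro v
        have h0 := hall v (Finset.mem_univ v)
        rcases mul_eq_zero.mp h0 with h0 | h0
        · rcases mul_eq_zero.mp h0 with h0 | h0
          · exact h0
          · exact absurd h0 (by linarith [hfpos m v])
        · exact absurd h0 (ne_of_gt (hMpos m v _))
      have := hx1 m
      simp [hxz] at this
  have hyle1 : ∀ m, y m ≤ 1 := by
    intro m
    rw [← hx1 m]
    exact Finset.single_le_sum (fun v _ => hx0 m v) (Finset.mem_univ _)
  -- the key inequalities
  have hkey : ∀ m, σ * c m * y m ≤ y m + (σ - 1) * y m ^ 2 ∧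
      y m + (σ - 1) * y m ^ 2 ≤ σ * c m * y m + q m := by
    intro m
    have hz : y m * (1 + (σ - 1) * y m) = ∑ v, x m v * f m v *
        ((q m / ((κ : ℝ) - 1)) ^ hammingDist v (wstar m) *
          (1 - q m) ^ (ℓ m - hammingDist v (wstar m))) := by
      rw [← hA m]; exact hqs m (wstar m)
    have hsplit : (∑ v, x m v * f m v *
        ((q m / ((κ : ℝ) - 1)) ^ hammingDist v (wstar m) *
          (1 - q m) ^ (ℓ m - hammingDist v (wstar m))))
        = σ * c m * y m + ∑ v ∈ Finset.univ.erase (wstar m), x m v * f m v *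
          ((q m / ((κ : ℝ) - 1)) ^ hammingDist v (wstar m) *
            (1 - q m) ^ (ℓ m - hammingDist v (wstar m))) := by
      rw [← Finset.add_sum_erase _ _ (Finset.mem_univ (wstar m))]
      congr 1
      rw [hf m (wstar m), hammingDist_self]
      simp [hcdef, hydef]
      ring
    set S := ∑ v ∈ Finset.univ.erase (wstar m), x m v * f m v *
        ((q m / ((κ : ℝ) - 1)) ^ hammingDist v (wstar m) *
          (1 - q m) ^ (ℓ m - hammingDist v (wstar m))) with hSdef
    have hS0 : 0 ≤ S := Finset.sum_nonneg fun v _ =>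
      mul_nonneg (mul_nonneg (hx0 m v) (by linarith [hfpos m v])) (hMpos m v _).le
    have hSq : S ≤ q m := by
      have hle : ∀ v ∈ Finset.univ.erase (wstar m), x m v * f m v *
          ((q m / ((κ : ℝ) - 1)) ^ hammingDist v (wstar m) *
            (1 - q m) ^ (ℓ m - hammingDist v (wstar m))) ≤ x m v * q m := by
        intro v hv
        have hvne : v ≠ wstar m := (Finset.mem_erase.mp hv).1
        have hd : 1 ≤ hammingDist v (wstar m) :=
          Nat.one_le_iff_ne_zero.mpr (fun h0 => hvne (hammingDist_eq_zero.mp h0))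
        have hqk0 : 0 ≤ q m / ((κ:ℝ) - 1) := (div_pos (hq0 m) (by linarith)).le
        have hqk1 : q m / ((κ:ℝ) - 1) ≤ q m := by
          rw [div_le_iff₀ (by linarith : (0:ℝ) < (κ:ℝ) - 1)]
          nlinarith [(hq0 m).le]
        have h1q : (0:ℝ) ≤ 1 - q m := by linarith [hq1' m]
        have hM : (q m / ((κ : ℝ) - 1)) ^ hammingDist v (wstar m) *
            (1 - q m) ^ (ℓ m - hammingDist v (wstar m)) ≤ q m := by
          calc (q m / ((κ : ℝ) - 1)) ^ hammingDist v (wstar m) *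
              (1 - q m) ^ (ℓ m - hammingDist v (wstar m))
              ≤ (q m / ((κ : ℝ) - 1)) ^ 1 * 1 := by
                refine mul_le_mul ?_ (pow_le_one₀ h1q (by linarith [hq0 m])) ?_ ?_
                · exact pow_le_pow_of_le_one hqk0 (le_trans hqk1 (hq1' m).le) hd
                · positivity
                · positivity
            _ ≤ q m := by rw [pow_one, mul_one]; exact hqk1
        rw [hf m v, if_neg hvne, mul_one]
        exact mul_le_mul_of_nonneg_left hM (hx0 m v)
      calc S ≤ ∑ v ∈ Finset.univ.erase (wstar m), x m v * q m :=
            Finset.sum_le_sum hle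
        _ = (∑ v ∈ Finset.univ.erase (wstar m), x m v) * q m := by
            rw [Finset.sum_mul]
        _ ≤ 1 * q m := by
            refine mul_le_mul_of_nonneg_right ?_ (hq0 m).le
            rw [← hx1 m]
            exact Finset.sum_le_sum_of_subset_of_nonneg
              (Finset.erase_subset _ _) (fun v _ _ => hx0 m v)
        _ = q m := one_mul _
    rw [hsplit] at hz
    constructor
    · nlinarith [hz, hS0]
    · nlinarith [hz, hSq]
  have hlow := fun m => (hkey m).1
  have hup := fun m => (hkey m).2
  -- upper bound (1-q)^ℓ ≤ exp(-(ℓ q))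
  have hcup : ∀ m, c m ≤ Real.exp (-((ℓ m : ℝ) * q m)) := by
    intro m
    have h1 : (1 - q m) ≤ Real.exp (-(q m)) := by
      linarith [Real.add_one_le_exp (-(q m))]
    have h2 : (0:ℝ) ≤ 1 - q m := by linarith [hq1' m]
    calc c m ≤ Real.exp (-(q m)) ^ (ℓ m) := pow_le_pow_left₀ h2 h1 _
      _ = Real.exp ((ℓ m : ℝ) * (-(q m))) := (Real.exp_nat_mul _ _).symm
      _ = Real.exp (-((ℓ m : ℝ) * q m)) := by ring_nf
  refine ⟨?_, ?_⟩
  · -- case a > log σ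
    intro hgt
    have hev : ∀ᶠ m in atTop, Real.log σ < (ℓ m : ℝ) * q m := by
      have h1 : ∀ᶠ m in atTop,
          ((Real.log σ : ℝ) : EReal) < (((ℓ m : ℝ) * q m : ℝ) : EReal) :=
        hlq.eventually_const_lt hgt
      filter_upwards [h1] with m hm
      exact_mod_cast hm
    have hc1 : ∀ᶠ m in atTop, σ * c m ≤ 1 := by
      filter_upwards [hev] with m hm
      have h2 : c m ≤ Real.exp (-Real.log σ) := by
        refine le_trans (hcup m) (Real.exp_le_exp.mpr (by linarith))
      rw [Real.exp_neg, Real.exp_log hσ0] at h2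
      calc σ * c m ≤ σ * σ⁻¹ := by nlinarith
        _ = 1 := mul_inv_cancel₀ (ne_of_gt hσ0)
    have hy00 : Tendsto y atTop (𝓝 0) :=
      aux_case1 hσ (fun m => (hy0 m).le) hup hq hc1
    constructor
    · have hLs : Tendsto (fun m => 1 + (σ - 1) * y m) atTop (𝓝 (1 + (σ - 1) * 0)) :=
        tendsto_const_nhds.add (hy00.const_mul _)
      have heq : (fun m => ∑ v, x m v * f m v) = fun m => 1 + (σ - 1) * y m :=
        funext hA
      rw [heq]
      simpa using hLs
    · exact hy00
  · -- case a < log σ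
    intro hlt
    have haT : a ≠ ⊤ := ne_top_of_lt hlt
    have haB : a ≠ ⊥ := by
      intro h; rw [h] at ha; exact absurd ha (by simp)
    have hAa : ((a.toReal : ℝ) : EReal) = a := EReal.coe_toReal haT haB
    have hA0 : 0 ≤ a.toReal := by
      have := EReal.coe_le_coe_iff.mp (by rw [hAa]; simpa using ha : ((0:ℝ):EReal) ≤ (a.toReal : EReal))
      exact this
    have hAlt : a.toReal < Real.log σ := by
      rw [← hAa] at hlt
      exact_mod_cast hlt
    have hσe : 1 < σ * Real.exp (-a.toReal) := by
      have h1 : Real.exp (-Real.log σ) < Real.exp (-a.toReal) :=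
        Real.exp_lt_exp.mpr (by linarith)
      rw [Real.exp_neg, Real.exp_log hσ0] at h1
      calc (1:ℝ) = σ * σ⁻¹ := (mul_inv_cancel₀ (ne_of_gt hσ0)).symm
        _ < σ * Real.exp (-a.toReal) := by
          exact mul_lt_mul_of_pos_left h1 hσ0
    -- real limit of ℓ q
    have hlq' : Tendsto (fun m => (ℓ m : ℝ) * q m) atTop (𝓝 a.toReal) := by
      rw [← hAa] at hlq
      exact EReal.tendsto_coe.mp hlq
    -- limit of c
    have hclo : ∀ m, Real.exp (-((ℓ m : ℝ) * q m / (1 - q m))) ≤ c m := by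
      intro m
      have h1q : (0:ℝ) < 1 - q m := by linarith [hq1' m]
      set t : ℝ := q m / (1 - q m) with htdef
      have ht1 : t + 1 = 1 / (1 - q m) := by
        rw [htdef]; field_simp; ring
      have h1 : 1 / (1 - q m) ≤ Real.exp t := by
        rw [← ht1]; linarith [Real.add_one_le_exp t]
      have h2 : Real.exp (-t) ≤ 1 - q m := by
        have hp : Real.exp (-t) * Real.exp t = 1 := by
          rw [← Real.exp_add]; simp
        have h3 : 1 ≤ (1 - q m) * Real.exp t := by
          rw [div_le_iff₀ h1q] at h1
          nlinarith [h1]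
        nlinarith [Real.exp_pos t, Real.exp_pos (-t)]
      calc Real.exp (-((ℓ m : ℝ) * q m / (1 - q m)))
          = Real.exp ((ℓ m : ℝ) * (-t)) := by rw [htdef]; ring_nf
        _ = Real.exp (-t) ^ (ℓ m) := Real.exp_nat_mul _ _
        _ ≤ c m := pow_le_pow_left₀ (Real.exp_pos _).le h2 _
    have ht2 : Tendsto (fun m => (ℓ m : ℝ) * q m / (1 - q m)) atTop (𝓝 a.toReal) := by
      have hden : Tendsto (fun m => 1 - q m) atTop (𝓝 1) := by
        simpa using tendsto_const_nhds.sub hq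
      have := hlq'.div hden one_ne_zero
      rw [div_one] at this
      exact this
    have hcl : Tendsto c atTop (𝓝 (Real.exp (-a.toReal))) := by
      have tlo : Tendsto (fun m => Real.exp (-((ℓ m : ℝ) * q m / (1 - q m)))) atTop
          (𝓝 (Real.exp (-a.toReal))) :=
        (Real.continuous_exp.tendsto _).comp ht2.neg
      have tup : Tendsto (fun m => Real.exp (-((ℓ m : ℝ) * q m))) atTop
          (𝓝 (Real.exp (-a.toReal))) :=
        (Real.continuous_exp.tendsto _).comp hlq'.neg
      exact tendsto_of_tendsto_of_tendsto_of_le_of_le tlo tup hclo hcup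
    have hyY : Tendsto y atTop
        (𝓝 ((σ * Real.exp (-a.toReal) - 1) / (σ - 1))) :=
      aux_case2 hσ hσe hy0 hlow hup hq hcl
    refine ⟨hσe, ?_, hyY⟩
    have hLs : Tendsto (fun m => 1 + (σ - 1) * y m) atTop
        (𝓝 (1 + (σ - 1) * ((σ * Real.exp (-a.toReal) - 1) / (σ - 1)))) :=
      tendsto_const_nhds.add (hyY.const_mul _)
    have heq : (fun m => ∑ v, x m v * f m v) = fun m => 1 + (σ - 1) * y m :=
      funext hA
    rw [heq]
    have hval : 1 + (σ - 1) * ((σ * Real.exp (-a.toReal) - 1) / (σ - 1))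
        = σ * Real.exp (-a.toReal) := by
      field_simp; ring
    rwa [hval] at hLs
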